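/- Pointwise domination of the deferral loss by the RL2D surrogate: let Ψ : [0,1] → [0,+∞] be non-increasing with Ψ(2/3) > 0. For every score vector h ∈ ℝ^{Ȳ}, every y ∈ [n], every cost value γ ∈ [0,1], and every maximizer k ∈ Ȳ of h (k ∈ argmax_{k'∈Ȳ} h_{k'}), one has 1_{k≠y}·1_{k∈[n]} + γ·1_{k=n+1} ≤ ( γ·Ψ(s_y(h)) + (1−γ)·Ψ(s_y(h) + s_{n+1}(h)) ) / Ψ(2/3). -/

import Mathlib

open scoped ENNReal

/-- Softmax of a score vector. -/
noncomputable def smax {m : ℕ} (v : Fin m → ℝ) (y : Fin m) : ℝ :=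
  Real.exp (v y) / ∑ y' : Fin m, Real.exp (v y')

lemma exp_sum_pos {m : ℕ} [NeZero m] (v : Fin m → ℝ) :
    0 < ∑ y' : Fin m, Real.exp (v y') :=
  Finset.sum_pos (fun _ _ => Real.exp_pos _) Finset.univ_nonempty

lemma smax_nonneg {m : ℕ} [NeZero m] (v : Fin m → ℝ) (a : Fin m) : 0 ≤ smax v a :=
  div_nonneg (Real.exp_pos _).le (exp_sum_pos v).le

lemma smax_le_one {m : ℕ} [NeZero m] (v : Fin m → ℝ) (a : Fin m) : smax v a ≤ 1 := by
  rw [smax, div_le_one (exp_sum_pos v)]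
  exact Finset.single_le_sum (fun i _ => (Real.exp_pos (v i)).le) (Finset.mem_univ a)

lemma pair_le {m : ℕ} (v : Fin m → ℝ) {a b : Fin m} (hab : a ≠ b) :
    Real.exp (v a) + Real.exp (v b) ≤ ∑ y' : Fin m, Real.exp (v y') := by
  have h := Finset.sum_le_sum_of_subset_of_nonneg (Finset.subset_univ ({a, b} : Finset (Fin m)))
    (fun i _ _ => (Real.exp_pos (v i)).le)
  simpa [Finset.sum_pair hab] using h

lemma triple_le {m : ℕ} (v : Fin m → ℝ) {a b c : Fin m} (hab : a ≠ b) (hac : a ≠ c)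
    (hbc : b ≠ c) :
    Real.exp (v a) + Real.exp (v b) + Real.exp (v c) ≤ ∑ y' : Fin m, Real.exp (v y') := by
  have h := Finset.sum_le_sum_of_subset_of_nonneg
    (Finset.subset_univ ({a, b, c} : Finset (Fin m)))
    (fun i _ _ => (Real.exp_pos (v i)).le)
  have hsum : ∑ i ∈ ({a, b, c} : Finset (Fin m)), Real.exp (v i)
      = Real.exp (v a) + Real.exp (v b) + Real.exp (v c) := by
    rw [Finset.sum_insert (by simp [hab, hac]), Finset.sum_pair hbc, add_assoc]
  linarith [h, hsum.symm.le, hsum.le]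

theorem pointwise_domination {n : ℕ} (hn : 2 ≤ n) (Ψ : ℝ → ℝ≥0∞)
    (hΨmono : AntitoneOn Ψ (Set.Icc (0 : ℝ) 1)) (hΨ23 : 0 < Ψ (2 / 3))
    (v : Fin (n + 1) → ℝ) (y : Fin n) (γ : ℝ) (hγ : γ ∈ Set.Icc (0 : ℝ) 1)
    (k : Fin (n + 1)) (hk : ∀ j, v j ≤ v k) :
    Ψ (2 / 3) *
        ENNReal.ofReal
          ((if k ≠ y.castSucc ∧ k ≠ Fin.last n then 1 else 0)
            + γ * (if k = Fin.last n then 1 else 0)) ≤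
      ENNReal.ofReal γ * Ψ (smax v y.castSucc)
        + ENNReal.ofReal (1 - γ) * Ψ (smax v y.castSucc + smax v (Fin.last n)) := by
  obtain ⟨hγ0, hγ1⟩ := hγ
  have hS : 0 < ∑ y' : Fin (n + 1), Real.exp (v y') := exp_sum_pos v
  have hylast : y.castSucc ≠ Fin.last n := (Fin.castSucc_lt_last y).ne
  have hmem23 : (2 / 3 : ℝ) ∈ Set.Icc (0 : ℝ) 1 := by norm_num
  -- membership of smax values
  have hsy0 : 0 ≤ smax v y.castSucc := smax_nonneg v _
  have hsl0 : 0 ≤ smax v (Fin.last n) := smax_nonneg v _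
  by_cases hky : k = y.castSucc
  · -- loss is zero
    have hklast : k ≠ Fin.last n := hky ▸ hylast
    simp [hky, hklast, hylast]
  · by_cases hkl : k = Fin.last n
    · -- k = last : need Ψ(2/3) * γ ≤ γ * Ψ(s_y) + ...
      have hy23 : smax v y.castSucc ≤ 2 / 3 := by
        rw [smax, div_le_iff₀ hS]
        have h1 : Real.exp (v y.castSucc) ≤ Real.exp (v k) := Real.exp_le_exp.2 (hk _)
        have h2 : Real.exp (v y.castSucc) + Real.exp (v k) ≤ ∑ y' : Fin (n+1), Real.exp (v y') :=
          pair_le v (fun h => hky h.symm)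
        nlinarith
      have hΨle : Ψ (2 / 3) ≤ Ψ (smax v y.castSucc) :=
        hΨmono ⟨hsy0, smax_le_one v _⟩ hmem23 hy23
      calc Ψ (2 / 3) * ENNReal.ofReal
            ((if k ≠ y.castSucc ∧ k ≠ Fin.last n then 1 else 0)
              + γ * (if k = Fin.last n then 1 else 0))
          = ENNReal.ofReal γ * Ψ (2 / 3) := by
            simp [hkl, mul_comm]
        _ ≤ ENNReal.ofReal γ * Ψ (smax v y.castSucc) := by gcongr
        _ ≤ _ := le_self_add
    · -- k distinct from y and last
      have hsum23 : smax v y.castSucc + smax v (Fin.last n) ≤ 2 / 3 := by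
        rw [smax, smax, ← add_div, div_le_iff₀ hS]
        have h1 : Real.exp (v y.castSucc) ≤ Real.exp (v k) := Real.exp_le_exp.2 (hk _)
        have h1' : Real.exp (v (Fin.last n)) ≤ Real.exp (v k) := Real.exp_le_exp.2 (hk _)
        have h2 : Real.exp (v y.castSucc) + Real.exp (v (Fin.last n)) + Real.exp (v k)
            ≤ ∑ y' : Fin (n+1), Real.exp (v y') :=
          triple_le v hylast (fun h => hky h.symm) (fun h => hkl h.symm)
        nlinarith
      have hy23 : smax v y.castSucc ≤ 2 / 3 := by linarith
      have hΨ1 : Ψ (2 / 3) ≤ Ψ (smax v y.castSucc) :=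
        hΨmono ⟨hsy0, smax_le_one v _⟩ hmem23 hy23
      have hΨ2 : Ψ (2 / 3) ≤ Ψ (smax v y.castSucc + smax v (Fin.last n)) :=
        hΨmono ⟨by linarith, by linarith⟩ hmem23 hsum23
      have hone : ENNReal.ofReal γ + ENNReal.ofReal (1 - γ) = 1 := by
        rw [← ENNReal.ofReal_add hγ0 (by linarith)]
        norm_num
      calc Ψ (2 / 3) * ENNReal.ofReal
            ((if k ≠ y.castSucc ∧ k ≠ Fin.last n then 1 else 0)
              + γ * (if k = Fin.last n then 1 else 0))
          = (ENNReal.ofReal γ + ENNReal.ofReal (1 - γ)) * Ψ (2 / 3) := by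
            simp [hky, hkl, hone, mul_comm]
        _ = ENNReal.ofReal γ * Ψ (2 / 3) + ENNReal.ofReal (1 - γ) * Ψ (2 / 3) := by
            ring
        _ ≤ _ := add_le_add (by gcongr) (by gcongr)
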